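/- Let B be a Young function with right-continuous derivative b, let 1 < r < s ≤ ∞, and set p = r/(r−1) and q = s/(s−1) (so q = 1 when s = ∞). Then ∫₀^∞ (t^{p−1} / b^{-1}(t))^{q/(p−q)} dt/t < ∞ if and only if ∫₀^∞ (B(t)/t^r)^{s/(s−r)} dt/t < ∞, where b^{-1} is the left-continuous inverse of b and the exponent s/(s−r) is interpreted as 1 when s = ∞. -/

import Mathlib

open MeasureTheory Filter Set ENNReal

noncomputable section

/-- A Young function: a convex, non-decreasing, left-continuous function
`A : [0,∞] → [0,∞]` with `A(0) = 0`, `A(0+) = 0` and `A(∞) = ∞`. -/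
structure YoungFunction where
  toFun : ℝ≥0∞ → ℝ≥0∞
  map_zero : toFun 0 = 0
  tendsto_zero : Filter.Tendsto toFun (nhdsWithin 0 (Set.Ioi 0)) (nhds 0)
  mono : Monotone toFun
  convex' : ∀ s t c : ℝ≥0∞, c ≤ 1 →
    toFun (c * s + (1 - c) * t) ≤ c * toFun s + (1 - c) * toFun t
  left_continuous : ∀ t : ℝ≥0∞, 0 < t → toFun t = ⨆ s ∈ Set.Iio t, toFun s
  map_top : toFun ⊤ = ⊤

/-- Left-continuous inverse of a non-decreasing function `F : [0,∞] → [0,∞]`: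
`F⁻¹(t) = inf {τ ≥ 0 : F(τ) ≥ t}`. -/
def leftInvE (F : ℝ≥0∞ → ℝ≥0∞) (t : ℝ≥0∞) : ℝ≥0∞ :=
  sInf {τ : ℝ≥0∞ | t ≤ F τ}

/-- `a` is the right-continuous derivative of the Young function `A`:
`a` is non-decreasing, right-continuous, `a(∞) = ∞`, and
`A(t) = ∫₀ᵗ a(s) ds` for all finite `t ≥ 0`. -/
def IsYoungDerivative (A : YoungFunction) (a : ℝ≥0∞ → ℝ≥0∞) : Prop :=
  Monotone a ∧ a ⊤ = ⊤ ∧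
    (∀ t : ℝ≥0∞, t ≠ ⊤ → Filter.Tendsto a (nhdsWithin t (Set.Ioi t)) (nhds (a t))) ∧
    ∀ t : ℝ, 0 ≤ t →
      A.toFun (ENNReal.ofReal t) = ∫⁻ s in Set.Ioc (0:ℝ) t, a (ENNReal.ofReal s)

/-- The Young conjugate `B̃(t) = sup {s·t − B(s) : s ∈ [0,∞]}`. -/
def youngConj (A : YoungFunction) (t : ℝ≥0∞) : ℝ≥0∞ :=
  ⨆ s : ℝ≥0∞, s * t - A.toFun s

variable {R : Type*} [MeasurableSpace R]

/-- The distribution function `f₊(λ) = μ({x : |f(x)| > λ})`. -/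
def distFn (μ : Measure R) (f : R → ℝ) (lam : ℝ≥0∞) : ℝ≥0∞ :=
  μ {x | lam < ENNReal.ofReal |f x|}

/-- The non-increasing rearrangement `f*(t) = inf {λ ≥ 0 : f₊(λ) ≤ t}`. -/
def rearr (μ : Measure R) (f : R → ℝ) (t : ℝ≥0∞) : ℝ≥0∞ :=
  sInf {lam : ℝ≥0∞ | distFn μ f lam ≤ t}

/-- The Lorentz functional `‖f‖_{p,q}` for `p, q ∈ (0,∞]`. -/
def lorentzNorm (μ : Measure R) (p q : ℝ≥0∞) (f : R → ℝ) : ℝ≥0∞ :=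
  if q = ⊤ then
    ⨆ t : Set.Ioi (0:ℝ), ENNReal.ofReal t.1 ^ (p⁻¹).toReal * rearr μ f (ENNReal.ofReal t.1)
  else
    (∫⁻ t in Set.Ioi (0:ℝ),
        (ENNReal.ofReal t ^ (p⁻¹).toReal * rearr μ f (ENNReal.ofReal t)) ^ q.toReal
          / ENNReal.ofReal t) ^ (q⁻¹).toReal

/-- The Luxemburg norm `‖f‖_A = inf {λ > 0 : ∫ A(|f|/λ) dμ ≤ 1}`. -/
def luxNorm (μ : Measure R) (A : YoungFunction) (f : R → ℝ) : ℝ≥0∞ :=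
  sInf {lam : ℝ≥0∞ | 0 < lam ∧ ∫⁻ x, A.toFun (ENNReal.ofReal |f x| / lam) ∂μ ≤ 1}

/-- The measure `μ` is non-atomic: every set of positive measure has a subset
of strictly smaller positive measure. -/
def NonAtomic (μ : Measure R) : Prop :=
  ∀ s : Set R, MeasurableSet s → 0 < μ s →
    ∃ t, t ⊆ s ∧ MeasurableSet t ∧ 0 < μ t ∧ μ t < μ s

/-- The almost-compact embedding `X ↪* Y`, for (quasi)norm functionals `NX`, `NY`:
`X ⊂ Y` and for every sequence of measurable sets `Eₙ` whose characteristic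
functions tend to `0` a.e., `sup_{‖f‖_X ≤ 1} ‖f χ_{Eₙ}‖_Y → 0`. -/
def AlmostCompactEmbedding (μ : Measure R) (NX NY : (R → ℝ) → ℝ≥0∞) : Prop :=
  (∀ f : R → ℝ, Measurable f → NX f < ⊤ → NY f < ⊤) ∧
    ∀ E : ℕ → Set R, (∀ n, MeasurableSet (E n)) →
      (∀ᵐ x ∂μ, Filter.Tendsto (fun n => (E n).indicator (fun _ => (1:ℝ)) x)
        Filter.atTop (nhds 0)) →
      Filter.Tendsto
        (fun n => ⨆ f : {f : R → ℝ // Measurable f ∧ NX f ≤ 1},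
          NY ((E n).indicator f.1)) Filter.atTop (nhds 0)

/-- The continuous embedding `X ↪ Y`: there is `C > 0` with `‖f‖_Y ≤ C ‖f‖_X`. -/
def NormEmbedding (μ : Measure R) (NX NY : (R → ℝ) → ℝ≥0∞) : Prop :=
  ∃ C : ℝ, 0 < C ∧ ∀ f : R → ℝ, Measurable f → NY f ≤ ENNReal.ofReal C * NX f


private lemma mono_meas {g : ℝ≥0∞ → ℝ≥0∞} (hg : Monotone g) :
    Measurable fun t : ℝ => g (ENNReal.ofReal t) :=
  (hg.comp fun _ _ h => ENNReal.ofReal_le_ofReal h).measurable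

private lemma lint_Ioi_rpow {δ : ℝ} (hδ : 0 < δ) {C : ℝ} (hC : 0 < C) :
    ∫⁻ u in Ioi C, ENNReal.ofReal u ^ (-δ - 1) = ENNReal.ofReal (C ^ (-δ) / δ) := by
  have hint : IntegrableOn (fun u : ℝ => u ^ (-δ - 1)) (Ioi C) :=
    integrableOn_Ioi_rpow_of_lt (by linarith) hC
  rw [show ∫⁻ u in Ioi C, ENNReal.ofReal u ^ (-δ - 1)
      = ∫⁻ u in Ioi C, ENNReal.ofReal (u ^ (-δ - 1)) from
    setLIntegral_congr_fun measurableSet_Ioi (fun u hu => by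
      rw [ENNReal.ofReal_rpow_of_pos (hC.trans hu)]),
    ← ofReal_integral_eq_lintegral_ofReal hint
      ((ae_restrict_iff' measurableSet_Ioi).2 (ae_of_all _ fun u hu =>
        Real.rpow_nonneg (le_of_lt (hC.trans hu)) _))]
  rw [integral_Ioi_rpow_of_lt (by linarith) hC]
  congr 1
  rw [show -δ - 1 + 1 = -δ by ring]
  field_simp

private lemma lint_Ioc_rpow {e : ℝ} (he : 0 < e) {C : ℝ} (hC : 0 < C) :
    ∫⁻ u in Ioc (0:ℝ) C, ENNReal.ofReal u ^ (e - 1) = ENNReal.ofReal (C ^ e / e) := by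
  have hint : IntegrableOn (fun u : ℝ => u ^ (e - 1)) (Ioc 0 C) :=
    (intervalIntegral.intervalIntegrable_rpow' (by linarith)).1
  rw [show ∫⁻ u in Ioc (0:ℝ) C, ENNReal.ofReal u ^ (e - 1)
      = ∫⁻ u in Ioc (0:ℝ) C, ENNReal.ofReal (u ^ (e - 1)) from
    setLIntegral_congr_fun measurableSet_Ioc (fun u hu => by
      rw [ENNReal.ofReal_rpow_of_pos hu.1]),
    ← ofReal_integral_eq_lintegral_ofReal hint
      ((ae_restrict_iff' measurableSet_Ioc).2 (ae_of_all _ fun u hu =>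
        Real.rpow_nonneg (le_of_lt hu.1) _))]
  have : ∫ u in Ioc (0:ℝ) C, u ^ (e - 1) = ∫ u in (0:ℝ)..C, u ^ (e - 1) := by
    rw [intervalIntegral.integral_of_le hC.le]
  rw [this, integral_rpow (Or.inl (by linarith))]
  rw [show e - 1 + 1 = e by ring, Real.zero_rpow he.ne', sub_zero]

private lemma lint_tail_zero {δ : ℝ} (hδ : 0 < δ) :
    ∫⁻ u in Ioi (0:ℝ), ENNReal.ofReal u ^ (-δ - 1) = ⊤ := by
  by_contra h
  have hI : ∫⁻ u in Ioi (0:ℝ), ENNReal.ofReal u ^ (-δ - 1) ≠ ⊤ := h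
  set I := ∫⁻ u in Ioi (0:ℝ), ENNReal.ofReal u ^ (-δ - 1) with hIdef
  set M := I.toReal with hM
  have hK : (0:ℝ) < δ * (M + 1) := by
    have : (0:ℝ) ≤ M := ENNReal.toReal_nonneg
    positivity
  set C := (δ * (M + 1)) ^ (-1/δ) with hC
  have hCpos : 0 < C := Real.rpow_pos_of_pos hK _
  have hval : C ^ (-δ) = δ * (M + 1) := by
    rw [hC, ← Real.rpow_mul hK.le]
    rw [show -1/δ * (-δ) = 1 by field_simp, Real.rpow_one]
  have hle : ENNReal.ofReal (C ^ (-δ) / δ) ≤ I :=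
    (lint_Ioi_rpow hδ hCpos) ▸ lintegral_mono_set (Ioi_subset_Ioi hCpos.le)
  rw [hval] at hle
  have : δ * (M + 1) / δ = M + 1 := by field_simp
  rw [this] at hle
  have := (ENNReal.ofReal_le_iff_le_toReal hI).1 hle
  have hM0 : (0:ℝ) ≤ M := ENNReal.toReal_nonneg
  linarith

private lemma lint_head_top {e : ℝ} (he : 0 < e) :
    ∫⁻ u in Ioi (0:ℝ), ENNReal.ofReal u ^ (e - 1) = ⊤ := by
  by_contra h
  have hI : ∫⁻ u in Ioi (0:ℝ), ENNReal.ofReal u ^ (e - 1) ≠ ⊤ := h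
  set I := ∫⁻ u in Ioi (0:ℝ), ENNReal.ofReal u ^ (e - 1) with hIdef
  set M := I.toReal with hM
  have hK : (0:ℝ) < e * (M + 1) := by
    have : (0:ℝ) ≤ M := ENNReal.toReal_nonneg
    positivity
  set C := (e * (M + 1)) ^ (1/e) with hC
  have hCpos : 0 < C := Real.rpow_pos_of_pos hK _
  have hval : C ^ e = e * (M + 1) := by
    rw [hC, ← Real.rpow_mul hK.le]
    rw [show 1/e * e = 1 by field_simp, Real.rpow_one]
  have hle : ENNReal.ofReal (C ^ e / e) ≤ I :=
    (lint_Ioc_rpow he hCpos) ▸ lintegral_mono_set Ioc_subset_Ioi_self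
  rw [hval] at hle
  have : e * (M + 1) / e = M + 1 := by field_simp
  rw [this] at hle
  have := (ENNReal.ofReal_le_iff_le_toReal hI).1 hle
  have hM0 : (0:ℝ) ≤ M := ENNReal.toReal_nonneg
  linarith

private lemma lint_tail_strict {δ : ℝ} (hδ : 0 < δ) (c : ℝ≥0∞) :
    ∫⁻ u in Ioi (0:ℝ) ∩ {u : ℝ | c < ENNReal.ofReal u}, ENNReal.ofReal u ^ (-δ - 1)
      = c ^ (-δ) / ENNReal.ofReal δ := by
  rcases eq_or_ne c ⊤ with rfl | hctop
  · have : {u : ℝ | (⊤:ℝ≥0∞) < ENNReal.ofReal u} = ∅ := by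
      ext u; simp [LT.lt.not_gt ENNReal.ofReal_lt_top]
    rw [this, inter_empty, Measure.restrict_empty, lintegral_zero_measure,
      ENNReal.top_rpow_of_neg (by linarith)]
    simp
  rcases eq_or_ne c 0 with rfl | hc0
  · have : {u : ℝ | (0:ℝ≥0∞) < ENNReal.ofReal u} = Ioi (0:ℝ) := by
      ext u; simp [ENNReal.ofReal_pos]
    rw [this, inter_self, lint_tail_zero hδ, ENNReal.zero_rpow_of_neg (by linarith),
      ENNReal.top_div_of_ne_top ENNReal.ofReal_ne_top]
  have hCpos : 0 < c.toReal := ENNReal.toReal_pos hc0 hctop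
  have hset : {u : ℝ | c < ENNReal.ofReal u} = Ioi c.toReal := by
    ext u; exact ENNReal.lt_ofReal_iff_toReal_lt hctop
  rw [hset, Ioi_inter_Ioi, sup_eq_right.2 hCpos.le, lint_Ioi_rpow hδ hCpos,
    ENNReal.ofReal_div_of_pos hδ, ← ENNReal.ofReal_rpow_of_pos hCpos,
    ENNReal.ofReal_toReal hctop]

private lemma lint_tail_nonstrict {δ : ℝ} (hδ : 0 < δ) (c : ℝ≥0∞) :
    ∫⁻ u in Ioi (0:ℝ) ∩ {u : ℝ | c ≤ ENNReal.ofReal u}, ENNReal.ofReal u ^ (-δ - 1)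
      = c ^ (-δ) / ENNReal.ofReal δ := by
  rcases eq_or_ne c ⊤ with rfl | hctop
  · have : {u : ℝ | (⊤:ℝ≥0∞) ≤ ENNReal.ofReal u} = ∅ := by
      ext u; simp only [mem_setOf_eq, mem_empty_iff_false, iff_false, top_le_iff]
      exact ENNReal.ofReal_ne_top
    rw [this, inter_empty, Measure.restrict_empty, lintegral_zero_measure,
      ENNReal.top_rpow_of_neg (by linarith)]
    simp
  rcases eq_or_ne c 0 with rfl | hc0
  · have : {u : ℝ | (0:ℝ≥0∞) ≤ ENNReal.ofReal u} = univ := by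
      ext u; simp
    rw [this, inter_univ, lint_tail_zero hδ, ENNReal.zero_rpow_of_neg (by linarith),
      ENNReal.top_div_of_ne_top ENNReal.ofReal_ne_top]
  have hCpos : 0 < c.toReal := ENNReal.toReal_pos hc0 hctop
  have hset : {u : ℝ | c ≤ ENNReal.ofReal u} = Ici c.toReal := by
    ext u
    constructor
    · intro h
      have hu : 0 < u := by
        rw [← ENNReal.ofReal_pos]
        exact lt_of_lt_of_le (pos_iff_ne_zero.2 hc0) h
      exact (ENNReal.le_ofReal_iff_toReal_le hctop hu.le).1 h
    · intro h
      have hu : 0 < u := lt_of_lt_of_le hCpos h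
      exact (ENNReal.le_ofReal_iff_toReal_le hctop hu.le).2 h
  rw [hset]
  rw [show Ioi (0:ℝ) ∩ Ici c.toReal = Ici c.toReal from
      inter_eq_self_of_subset_right (fun u hu => lt_of_lt_of_le hCpos hu),
    setLIntegral_congr (μ := volume) (Ioi_ae_eq_Ici (a := c.toReal)).symm, lint_Ioi_rpow hδ hCpos,
    ENNReal.ofReal_div_of_pos hδ, ← ENNReal.ofReal_rpow_of_pos hCpos,
    ENNReal.ofReal_toReal hctop]

private lemma lint_tail {δ : ℝ} (hδ : 0 < δ) (c : ℝ≥0∞) {S : Set ℝ}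
    (h1 : ∀ u : ℝ, 0 < u → c < ENNReal.ofReal u → u ∈ S)
    (h2 : ∀ u : ℝ, 0 < u → u ∈ S → c ≤ ENNReal.ofReal u) :
    ∫⁻ u in Ioi (0:ℝ) ∩ S, ENNReal.ofReal u ^ (-δ - 1) = c ^ (-δ) / ENNReal.ofReal δ := by
  apply le_antisymm
  · rw [← lint_tail_nonstrict hδ c]
    exact lintegral_mono_set (fun u hu => ⟨hu.1, h2 u hu.1 hu.2⟩)
  · rw [← lint_tail_strict hδ c]
    exact lintegral_mono_set (fun u hu => ⟨hu.1, h1 u hu.1 hu.2⟩)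

private lemma lint_head_strict {e : ℝ} (he : 0 < e) (c : ℝ≥0∞) :
    ∫⁻ u in Ioi (0:ℝ) ∩ {u : ℝ | ENNReal.ofReal u < c}, ENNReal.ofReal u ^ (e - 1)
      = c ^ e / ENNReal.ofReal e := by
  rcases eq_or_ne c ⊤ with rfl | hctop
  · have : {u : ℝ | ENNReal.ofReal u < (⊤:ℝ≥0∞)} = univ := by
      ext u; simp [ENNReal.ofReal_lt_top]
    rw [this, inter_univ, lint_head_top he, ENNReal.top_rpow_of_pos he,
      ENNReal.top_div_of_ne_top ENNReal.ofReal_ne_top]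
  rcases eq_or_ne c 0 with rfl | hc0
  · have : {u : ℝ | ENNReal.ofReal u < (0:ℝ≥0∞)} = ∅ := by
      ext u; simp
    rw [this, inter_empty, Measure.restrict_empty, lintegral_zero_measure,
      ENNReal.zero_rpow_of_pos he]
    simp
  have hCpos : 0 < c.toReal := ENNReal.toReal_pos hc0 hctop
  have hset : {u : ℝ | ENNReal.ofReal u < c} = Iio c.toReal := by
    ext u
    by_cases hu : 0 ≤ u
    · exact ENNReal.ofReal_lt_iff_lt_toReal hu hctop
    · push_neg at hu
      simp only [mem_setOf_eq, mem_Iio]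
      constructor
      · intro _; linarith
      · intro _
        rw [ENNReal.ofReal_of_nonpos hu.le]
        exact pos_iff_ne_zero.2 hc0
  rw [hset, Ioi_inter_Iio, setLIntegral_congr (μ := volume) (Ioo_ae_eq_Ioc (b := c.toReal)),
    lint_Ioc_rpow he hCpos, ENNReal.ofReal_div_of_pos he,
    ← ENNReal.ofReal_rpow_of_pos hCpos, ENNReal.ofReal_toReal hctop]

private lemma lint_head_nonstrict {e : ℝ} (he : 0 < e) (c : ℝ≥0∞) :
    ∫⁻ u in Ioi (0:ℝ) ∩ {u : ℝ | ENNReal.ofReal u ≤ c}, ENNReal.ofReal u ^ (e - 1)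
      = c ^ e / ENNReal.ofReal e := by
  rcases eq_or_ne c ⊤ with rfl | hctop
  · have : {u : ℝ | ENNReal.ofReal u ≤ (⊤:ℝ≥0∞)} = univ := by
      ext u; simp
    rw [this, inter_univ, lint_head_top he, ENNReal.top_rpow_of_pos he,
      ENNReal.top_div_of_ne_top ENNReal.ofReal_ne_top]
  rcases eq_or_ne c 0 with rfl | hc0
  · have : Ioi (0:ℝ) ∩ {u : ℝ | ENNReal.ofReal u ≤ (0:ℝ≥0∞)} = ∅ := by
      ext u
      simp only [mem_inter_iff, mem_Ioi, mem_setOf_eq, nonpos_iff_eq_zero,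
        ENNReal.ofReal_eq_zero, mem_empty_iff_false, iff_false, not_and]
      intro hu; linarith
    rw [this, Measure.restrict_empty, lintegral_zero_measure,
      ENNReal.zero_rpow_of_pos he]
    simp
  have hCpos : 0 < c.toReal := ENNReal.toReal_pos hc0 hctop
  have hset : {u : ℝ | ENNReal.ofReal u ≤ c} = Iic c.toReal := by
    ext u; exact ENNReal.ofReal_le_iff_le_toReal hctop
  rw [hset, Ioi_inter_Iic, lint_Ioc_rpow he hCpos, ENNReal.ofReal_div_of_pos he,
    ← ENNReal.ofReal_rpow_of_pos hCpos, ENNReal.ofReal_toReal hctop]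

private lemma lint_head {e : ℝ} (he : 0 < e) (c : ℝ≥0∞) {S : Set ℝ}
    (h1 : ∀ u : ℝ, 0 < u → ENNReal.ofReal u < c → u ∈ S)
    (h2 : ∀ u : ℝ, 0 < u → u ∈ S → ENNReal.ofReal u ≤ c) :
    ∫⁻ u in Ioi (0:ℝ) ∩ S, ENNReal.ofReal u ^ (e - 1) = c ^ e / ENNReal.ofReal e := by
  apply le_antisymm
  · rw [← lint_head_nonstrict he c]
    exact lintegral_mono_set (fun u hu => ⟨hu.1, h2 u hu.1 hu.2⟩)
  · rw [← lint_head_strict he c]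
    exact lintegral_mono_set (fun u hu => ⟨hu.1, h1 u hu.1 hu.2⟩)

private lemma mrpow {c : ℝ} : Measurable fun x : ℝ≥0∞ => x ^ c :=
  ENNReal.continuous_rpow_const.measurable

private lemma ofReal_rpow_ne_top {t c : ℝ} (ht : 0 < t) : ENNReal.ofReal t ^ c ≠ ⊤ := by
  rw [ENNReal.ofReal_rpow_of_pos ht]; exact ENNReal.ofReal_ne_top

private lemma core_swap (b : ℝ≥0∞ → ℝ≥0∞) (hbm : Monotone b)
    {e δ : ℝ} (he : 0 < e) (hδ : 0 < δ) :
    (∫⁻ t in Ioi (0:ℝ), ENNReal.ofReal t ^ (e - 1) * leftInvE b (ENNReal.ofReal t) ^ (-δ))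
        * (ENNReal.ofReal δ)⁻¹
      = (∫⁻ t in Ioi (0:ℝ), b (ENNReal.ofReal t) ^ e * ENNReal.ofReal t ^ (-δ - 1))
        * (ENNReal.ofReal e)⁻¹ := by
  have mb : Measurable fun t : ℝ => b (ENNReal.ofReal t) := mono_meas hbm
  set μ := volume.restrict (Ioi (0:ℝ)) with hμ
  set U : Set (ℝ × ℝ) := {p : ℝ × ℝ | ENNReal.ofReal p.2 ≤ b (ENNReal.ofReal p.1)} with hU
  have hUm : MeasurableSet U :=
    measurableSet_le (ENNReal.measurable_ofReal.comp measurable_snd) (mb.comp measurable_fst)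
  set F : ℝ → ℝ → ℝ≥0∞ := fun t lam =>
    U.indicator (fun p => ENNReal.ofReal p.2 ^ (e - 1) * ENNReal.ofReal p.1 ^ (-δ - 1))
      (t, lam) with hF
  have hFm : AEMeasurable (Function.uncurry F) (μ.prod μ) := by
    have : Function.uncurry F = U.indicator
        (fun p : ℝ × ℝ => ENNReal.ofReal p.2 ^ (e - 1) * ENNReal.ofReal p.1 ^ (-δ - 1)) := by
      funext p; cases p; rfl
    rw [this]
    exact (Measurable.indicator
      ((mrpow.comp (ENNReal.measurable_ofReal.comp measurable_snd)).mul
        (mrpow.comp (ENNReal.measurable_ofReal.comp measurable_fst))) hUm).aemeasurable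
  have heinv : (ENNReal.ofReal e)⁻¹ ≠ ⊤ :=
    ENNReal.inv_ne_top.2 (ENNReal.ofReal_pos.2 he).ne'
  have hδinv : (ENNReal.ofReal δ)⁻¹ ≠ ⊤ :=
    ENNReal.inv_ne_top.2 (ENNReal.ofReal_pos.2 hδ).ne'
  have claim1 : ∫⁻ t, ∫⁻ lam, F t lam ∂μ ∂μ
      = (∫⁻ t in Ioi (0:ℝ), b (ENNReal.ofReal t) ^ e * ENNReal.ofReal t ^ (-δ - 1))
          * (ENNReal.ofReal e)⁻¹ := by
    have inner : ∀ t : ℝ, t ∈ Ioi (0:ℝ) → ∫⁻ lam, F t lam ∂μ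
        = (b (ENNReal.ofReal t) ^ e * ENNReal.ofReal t ^ (-δ - 1)) * (ENNReal.ofReal e)⁻¹ := by
      intro t ht
      have hfun : (fun lam => F t lam) = fun lam : ℝ =>
          {lam : ℝ | ENNReal.ofReal lam ≤ b (ENNReal.ofReal t)}.indicator
            (fun lam : ℝ => ENNReal.ofReal lam ^ (e - 1)) lam * ENNReal.ofReal t ^ (-δ - 1) := by
        funext lam
        show U.indicator (fun p : ℝ × ℝ =>
          ENNReal.ofReal p.2 ^ (e - 1) * ENNReal.ofReal p.1 ^ (-δ - 1)) (t, lam) = _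
        by_cases hmem : ENNReal.ofReal lam ≤ b (ENNReal.ofReal t)
        · simp only [Set.indicator_of_mem (show (t, lam) ∈ U from hmem),
            Set.indicator_of_mem (show lam ∈ {lam : ℝ | ENNReal.ofReal lam ≤ b (ENNReal.ofReal t)} from hmem)]
        · simp only [Set.indicator_of_notMem (show (t, lam) ∉ U from hmem),
            Set.indicator_of_notMem (show lam ∉ {lam : ℝ | ENNReal.ofReal lam ≤ b (ENNReal.ofReal t)} from hmem), zero_mul]
      have hSm : MeasurableSet {lam : ℝ | ENNReal.ofReal lam ≤ b (ENNReal.ofReal t)} :=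
        measurableSet_le ENNReal.measurable_ofReal measurable_const
      rw [hfun, lintegral_mul_const' _ _ (ofReal_rpow_ne_top (mem_Ioi.1 ht)), hμ,
        lintegral_indicator hSm, Measure.restrict_restrict hSm, inter_comm,
        lint_head (S := {lam : ℝ | ENNReal.ofReal lam ≤ b (ENNReal.ofReal t)}) he
          (b (ENNReal.ofReal t)) (fun u _ h => le_of_lt h) (fun u _ h => h),
        ENNReal.div_eq_inv_mul]
      ring
    calc ∫⁻ t, ∫⁻ lam, F t lam ∂μ ∂μ
        = ∫⁻ t in Ioi (0:ℝ), (b (ENNReal.ofReal t) ^ e * ENNReal.ofReal t ^ (-δ - 1))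
            * (ENNReal.ofReal e)⁻¹ :=
          setLIntegral_congr_fun measurableSet_Ioi inner
      _ = (∫⁻ t in Ioi (0:ℝ), b (ENNReal.ofReal t) ^ e * ENNReal.ofReal t ^ (-δ - 1))
            * (ENNReal.ofReal e)⁻¹ := lintegral_mul_const' _ _ heinv
  have claim2 : ∫⁻ lam, ∫⁻ t, F t lam ∂μ ∂μ
      = (∫⁻ t in Ioi (0:ℝ), ENNReal.ofReal t ^ (e - 1) * leftInvE b (ENNReal.ofReal t) ^ (-δ))
          * (ENNReal.ofReal δ)⁻¹ := by
    have inner : ∀ lam : ℝ, lam ∈ Ioi (0:ℝ) → ∫⁻ t, F t lam ∂μ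
        = (ENNReal.ofReal lam ^ (e - 1) * leftInvE b (ENNReal.ofReal lam) ^ (-δ))
            * (ENNReal.ofReal δ)⁻¹ := by
      intro lam hlam
      have hfun : (fun t => F t lam) = fun t : ℝ =>
          {t : ℝ | ENNReal.ofReal lam ≤ b (ENNReal.ofReal t)}.indicator
            (fun t : ℝ => ENNReal.ofReal t ^ (-δ - 1)) t * ENNReal.ofReal lam ^ (e - 1) := by
        funext t
        show U.indicator (fun p : ℝ × ℝ =>
          ENNReal.ofReal p.2 ^ (e - 1) * ENNReal.ofReal p.1 ^ (-δ - 1)) (t, lam) = _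
        by_cases hmem : ENNReal.ofReal lam ≤ b (ENNReal.ofReal t)
        · simp only [Set.indicator_of_mem (show (t, lam) ∈ U from hmem),
            Set.indicator_of_mem (show t ∈ {t : ℝ | ENNReal.ofReal lam ≤ b (ENNReal.ofReal t)} from hmem)]
          exact mul_comm _ _
        · simp only [Set.indicator_of_notMem (show (t, lam) ∉ U from hmem),
            Set.indicator_of_notMem (show t ∉ {t : ℝ | ENNReal.ofReal lam ≤ b (ENNReal.ofReal t)} from hmem), zero_mul]
      have hSm : MeasurableSet {t : ℝ | ENNReal.ofReal lam ≤ b (ENNReal.ofReal t)} :=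
        measurableSet_le measurable_const mb
      rw [hfun, lintegral_mul_const' _ _ (ofReal_rpow_ne_top (mem_Ioi.1 hlam)), hμ,
        lintegral_indicator hSm, Measure.restrict_restrict hSm, inter_comm,
        lint_tail (S := {t : ℝ | ENNReal.ofReal lam ≤ b (ENNReal.ofReal t)}) hδ
          (leftInvE b (ENNReal.ofReal lam))
          (fun u _ hlt => by
            obtain ⟨τ, hτ, hτu⟩ := sInf_lt_iff.1 hlt
            exact le_trans hτ (hbm hτu.le))
          (fun u _ hmem => sInf_le hmem),
        ENNReal.div_eq_inv_mul]
      ring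
    calc ∫⁻ lam, ∫⁻ t, F t lam ∂μ ∂μ
        = ∫⁻ lam in Ioi (0:ℝ), (ENNReal.ofReal lam ^ (e - 1)
            * leftInvE b (ENNReal.ofReal lam) ^ (-δ)) * (ENNReal.ofReal δ)⁻¹ :=
          setLIntegral_congr_fun measurableSet_Ioi inner
      _ = (∫⁻ t in Ioi (0:ℝ), ENNReal.ofReal t ^ (e - 1)
            * leftInvE b (ENNReal.ofReal t) ^ (-δ)) * (ENNReal.ofReal δ)⁻¹ :=
          lintegral_mul_const' _ _ hδinv
  rw [← claim1, ← claim2, lintegral_lintegral_swap hFm]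

private lemma lint_comp_two {g : ℝ → ℝ≥0∞} (hg : Measurable g) :
    ∫⁻ t in Ioi (0:ℝ), g (2 * t) = ENNReal.ofReal (1/2) * ∫⁻ t in Ioi (0:ℝ), g t := by
  have h1 : ∫⁻ t in Ioi (0:ℝ), g (2 * t)
      = ∫⁻ t, (Ioi (0:ℝ)).indicator g (2 * t) := by
    rw [← lintegral_indicator measurableSet_Ioi]
    apply lintegral_congr
    intro t
    by_cases ht : 0 < t
    · rw [Set.indicator_of_mem (mem_Ioi.2 ht),
        Set.indicator_of_mem (mem_Ioi.2 (by linarith))]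
    · rw [Set.indicator_of_notMem (fun h => ht (mem_Ioi.1 h)),
        Set.indicator_of_notMem (fun h => ht (by
          have := mem_Ioi.1 h; linarith))]
  have hmap : Measure.map (fun t : ℝ => 2 * t) volume
      = ENNReal.ofReal |(2:ℝ)⁻¹| • volume := Real.map_volume_mul_left (by norm_num)
  have h2 : ∫⁻ t, (Ioi (0:ℝ)).indicator g (2 * t)
      = ∫⁻ t, (Ioi (0:ℝ)).indicator g t ∂(Measure.map (fun t : ℝ => 2 * t) volume) :=
    (lintegral_map (hg.indicator measurableSet_Ioi) (measurable_const_mul 2)).symm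
  rw [h1, h2, hmap, lintegral_smul_measure, lintegral_indicator measurableSet_Ioi,
    show |(2:ℝ)⁻¹| = 1/2 by norm_num, smul_eq_mul]

private lemma mul_inv_lt_top_iff {c x : ℝ≥0∞} (hc0 : c ≠ 0) (hct : c ≠ ⊤) :
    x * c⁻¹ < ⊤ ↔ x < ⊤ := by
  constructor
  · intro h
    have hx : x = x * c⁻¹ * c := by
      rw [mul_assoc, ENNReal.inv_mul_cancel hc0 hct, mul_one]
    rw [hx]
    exact ENNReal.mul_lt_top h (lt_top_iff_ne_top.2 hct)
  · intro h
    exact ENNReal.mul_lt_top h (lt_top_iff_ne_top.2 (ENNReal.inv_ne_top.2 hc0))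

/-- Let `B` be a Young function with right-continuous derivative `b`,
`1 < r < s ≤ ∞`, `p = r/(r-1)`, `q = s/(s-1)` (`q = 1` when `s = ∞`). Then
`∫₀^∞ (t^{p-1}/b⁻¹(t))^{q/(p-q)} dt/t < ∞` iff `∫₀^∞ (B(t)/t^r)^{s/(s-r)} dt/t < ∞`,
the exponent `s/(s-r)` being interpreted as `1` when `s = ∞`. -/
theorem dual_integral_conditions_equivalent
    (B : YoungFunction) (b : ℝ≥0∞ → ℝ≥0∞) (hb : IsYoungDerivative B b)
    (r : ℝ) (s : ℝ≥0∞) (hr : 1 < r) (hrs : ENNReal.ofReal r < s)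
    (p q e : ℝ) (hp : p = r / (r - 1))
    (hq : q = if s = ⊤ then 1 else s.toReal / (s.toReal - 1))
    (he : e = if s = ⊤ then 1 else s.toReal / (s.toReal - r)) :
    ((∫⁻ t in Set.Ioi (0:ℝ),
        (ENNReal.ofReal t ^ (p - 1) / leftInvE b (ENNReal.ofReal t)) ^ (q / (p - q))
          / ENNReal.ofReal t) < ⊤ ↔
      (∫⁻ t in Set.Ioi (0:ℝ),
        (B.toFun (ENNReal.ofReal t) / ENNReal.ofReal t ^ r) ^ e
          / ENNReal.ofReal t) < ⊤) := by
  have hbm : Monotone b := hb.1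
  have hBint := hb.2.2.2
  have hr1 : (0:ℝ) < r - 1 := by linarith
  have hr0 : (0:ℝ) < r := by linarith
  have he0 : 0 < e := by
    rcases eq_or_ne s ⊤ with rfl | hs
    · rw [he, if_pos rfl]; norm_num
    · have hrS : r < s.toReal := by
        have h1 : (ENNReal.ofReal r).toReal < s.toReal := ENNReal.toReal_strict_mono hs hrs
        rwa [ENNReal.toReal_ofReal hr0.le] at h1
      rw [he, if_neg hs]
      exact div_pos (by linarith) (by linarith)
  set δ : ℝ := (r - 1) * e with hδdef
  have hδ0 : 0 < δ := mul_pos hr1 he0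
  have hqpq : q / (p - q) = δ := by
    rcases eq_or_ne s ⊤ with rfl | hs
    · rw [hδdef, hp, hq, he]
      simp only [reduceIte]
      have hd : r / (r - 1) - 1 = 1 / (r - 1) := by field_simp; ring
      rw [hd, one_div_one_div]
      ring
    · have hrS : r < s.toReal := by
        have h1 : (ENNReal.ofReal r).toReal < s.toReal := ENNReal.toReal_strict_mono hs hrs
        rwa [ENNReal.toReal_ofReal hr0.le] at h1
      set S := s.toReal with hSdef
      have hS1 : 1 < S := hr.trans hrS
      rw [hδdef, hp, hq, if_neg hs, he, if_neg hs]
      have h1 : (S - 1) ≠ 0 := by intro h; linarith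
      have h2 : (r - 1) ≠ 0 := hr1.ne'
      have h3 : (S - r) ≠ 0 := by intro h; linarith
      have hd : r / (r - 1) - S / (S - 1) = (S - r) / ((r - 1) * (S - 1)) := by
        field_simp
        ring
      rw [hd]
      field_simp
  have he1 : (p - 1) * δ = e := by
    rw [hδdef, hp]
    have hd : r / (r - 1) - 1 = 1 / (r - 1) := by field_simp; ring
    rw [hd]
    field_simp
  have hre : -δ - 1 = e + (-(r * e) - 1) := by rw [hδdef]; ring
  have mb : Measurable fun t : ℝ => b (ENNReal.ofReal t) := mono_meas hbm
  have hB_le : ∀ t : ℝ, 0 < t →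
      B.toFun (ENNReal.ofReal t) ≤ ENNReal.ofReal t * b (ENNReal.ofReal t) := by
    intro t ht
    rw [hBint t ht.le]
    calc ∫⁻ u in Ioc (0:ℝ) t, b (ENNReal.ofReal u)
        ≤ ∫⁻ _ in Ioc (0:ℝ) t, b (ENNReal.ofReal t) :=
          setLIntegral_mono measurable_const
            (fun u hu => hbm (ENNReal.ofReal_le_ofReal hu.2))
      _ = b (ENNReal.ofReal t) * volume (Ioc (0:ℝ) t) := setLIntegral_const _ _
      _ = ENNReal.ofReal t * b (ENNReal.ofReal t) := by
          rw [Real.volume_Ioc, sub_zero, mul_comm]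
  have hB_ge : ∀ t : ℝ, 0 < t →
      ENNReal.ofReal t * b (ENNReal.ofReal t) ≤ B.toFun (ENNReal.ofReal (2 * t)) := by
    intro t ht
    rw [hBint (2 * t) (by linarith)]
    calc ENNReal.ofReal t * b (ENNReal.ofReal t)
        = b (ENNReal.ofReal t) * volume (Ioc t (2 * t)) := by
          rw [Real.volume_Ioc, show 2 * t - t = t by ring, mul_comm]
      _ = ∫⁻ _ in Ioc t (2 * t), b (ENNReal.ofReal t) := (setLIntegral_const _ _).symm
      _ ≤ ∫⁻ u in Ioc t (2 * t), b (ENNReal.ofReal u) :=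
          setLIntegral_mono (mono_meas hbm)
            (fun u hu => hbm (ENNReal.ofReal_le_ofReal hu.1.le))
      _ ≤ ∫⁻ u in Ioc (0:ℝ) (2 * t), b (ENNReal.ofReal u) :=
          lintegral_mono_set (Ioc_subset_Ioc_left ht.le)
  have hLHS : (∫⁻ t in Ioi (0:ℝ),
        (ENNReal.ofReal t ^ (p - 1) / leftInvE b (ENNReal.ofReal t)) ^ (q / (p - q))
          / ENNReal.ofReal t)
      = ∫⁻ t in Ioi (0:ℝ),
          ENNReal.ofReal t ^ (e - 1) * leftInvE b (ENNReal.ofReal t) ^ (-δ) := by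
    refine setLIntegral_congr_fun measurableSet_Ioi (fun t ht => ?_)
    have ht0 : ENNReal.ofReal t ≠ 0 := (ENNReal.ofReal_pos.2 ht).ne'
    rw [hqpq, ENNReal.div_rpow_of_nonneg _ _ hδ0.le, ← ENNReal.rpow_mul, he1,
      ENNReal.rpow_neg, div_eq_mul_inv, div_eq_mul_inv,
      show e - 1 = e + (-1) by ring, ENNReal.rpow_add _ _ ht0 ENNReal.ofReal_ne_top,
      ENNReal.rpow_neg_one]
    ring
  have hRHS : (∫⁻ t in Ioi (0:ℝ),
        (B.toFun (ENNReal.ofReal t) / ENNReal.ofReal t ^ r) ^ e / ENNReal.ofReal t)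
      = ∫⁻ t in Ioi (0:ℝ),
          B.toFun (ENNReal.ofReal t) ^ e * ENNReal.ofReal t ^ (-(r * e) - 1) := by
    refine setLIntegral_congr_fun measurableSet_Ioi (fun t ht => ?_)
    have ht0 : ENNReal.ofReal t ≠ 0 := (ENNReal.ofReal_pos.2 ht).ne'
    rw [ENNReal.div_rpow_of_nonneg _ _ he0.le, ← ENNReal.rpow_mul,
      show -(r * e) - 1 = -(r * e) + (-1) by ring,
      ENNReal.rpow_add _ _ ht0 ENNReal.ofReal_ne_top, ENNReal.rpow_neg,
      ENNReal.rpow_neg_one, div_eq_mul_inv, div_eq_mul_inv]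
    ring
  have core := core_swap b hbm he0 hδ0
  have hofδ0 : (ENNReal.ofReal δ) ≠ 0 := (ENNReal.ofReal_pos.2 hδ0).ne'
  have hofe0 : (ENNReal.ofReal e) ≠ 0 := (ENNReal.ofReal_pos.2 he0).ne'
  have h1 : (∫⁻ t in Ioi (0:ℝ),
        ENNReal.ofReal t ^ (e - 1) * leftInvE b (ENNReal.ofReal t) ^ (-δ)) < ⊤
      ↔ (∫⁻ t in Ioi (0:ℝ),
        b (ENNReal.ofReal t) ^ e * ENNReal.ofReal t ^ (-δ - 1)) < ⊤ := by
    rw [← mul_inv_lt_top_iff hofδ0 ENNReal.ofReal_ne_top, core,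
      mul_inv_lt_top_iff hofe0 ENNReal.ofReal_ne_top]
  have hJ2Ib : (∫⁻ t in Ioi (0:ℝ),
        B.toFun (ENNReal.ofReal t) ^ e * ENNReal.ofReal t ^ (-(r * e) - 1))
      ≤ ∫⁻ t in Ioi (0:ℝ), b (ENNReal.ofReal t) ^ e * ENNReal.ofReal t ^ (-δ - 1) := by
    refine setLIntegral_mono
      ((mrpow.comp mb).mul (mrpow.comp ENNReal.measurable_ofReal)) fun t ht => ?_
    have ht0 : ENNReal.ofReal t ≠ 0 := (ENNReal.ofReal_pos.2 ht).ne'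
    calc B.toFun (ENNReal.ofReal t) ^ e * ENNReal.ofReal t ^ (-(r * e) - 1)
        ≤ (ENNReal.ofReal t * b (ENNReal.ofReal t)) ^ e
            * ENNReal.ofReal t ^ (-(r * e) - 1) :=
          mul_le_mul_left (ENNReal.rpow_le_rpow (hB_le t ht) he0.le) _
      _ = b (ENNReal.ofReal t) ^ e * ENNReal.ofReal t ^ (-δ - 1) := by
          rw [ENNReal.mul_rpow_of_nonneg _ _ he0.le, hre,
            ENNReal.rpow_add _ _ ht0 ENNReal.ofReal_ne_top]
          ring
  have hKne : ENNReal.ofReal (1/2:ℝ) ^ (-(r * e) - 1) ≠ ⊤ :=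
    ofReal_rpow_ne_top (by norm_num)
  have hGm : Measurable fun u : ℝ =>
      B.toFun (ENNReal.ofReal u) ^ e * ENNReal.ofReal u ^ (-(r * e) - 1) :=
    (mrpow.comp (mono_meas B.mono)).mul (mrpow.comp ENNReal.measurable_ofReal)
  have hIbJ2 : (∫⁻ t in Ioi (0:ℝ),
        b (ENNReal.ofReal t) ^ e * ENNReal.ofReal t ^ (-δ - 1))
      ≤ ENNReal.ofReal (1/2:ℝ) ^ (-(r * e) - 1) * (ENNReal.ofReal (1/2:ℝ) *
          ∫⁻ t in Ioi (0:ℝ),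
            B.toFun (ENNReal.ofReal t) ^ e * ENNReal.ofReal t ^ (-(r * e) - 1)) := by
    have step1 : (∫⁻ t in Ioi (0:ℝ),
          b (ENNReal.ofReal t) ^ e * ENNReal.ofReal t ^ (-δ - 1))
        ≤ ∫⁻ t in Ioi (0:ℝ), ENNReal.ofReal (1/2:ℝ) ^ (-(r * e) - 1) *
            ((fun u : ℝ => B.toFun (ENNReal.ofReal u) ^ e
              * ENNReal.ofReal u ^ (-(r * e) - 1)) (2 * t)) := by
      refine setLIntegral_mono
        (measurable_const.mul (hGm.comp (measurable_const_mul 2))) fun t ht => ?_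
      have ht' : (0:ℝ) < t := ht
      have ht0 : ENNReal.ofReal t ≠ 0 := (ENNReal.ofReal_pos.2 ht').ne'
      have h2t0 : ENNReal.ofReal (2 * t) ≠ 0 :=
        (ENNReal.ofReal_pos.2 (by linarith)).ne'
      have hsplit : ENNReal.ofReal t ^ (-(r * e) - 1)
          = ENNReal.ofReal (1/2:ℝ) ^ (-(r * e) - 1)
            * ENNReal.ofReal (2 * t) ^ (-(r * e) - 1) := by
        rw [← ENNReal.mul_rpow_of_ne_zero (by norm_num) h2t0,
          ← ENNReal.ofReal_mul (by norm_num), show (1/2:ℝ) * (2 * t) = t by ring]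
      calc b (ENNReal.ofReal t) ^ e * ENNReal.ofReal t ^ (-δ - 1)
          = (ENNReal.ofReal t * b (ENNReal.ofReal t)) ^ e
              * ENNReal.ofReal t ^ (-(r * e) - 1) := by
            rw [ENNReal.mul_rpow_of_nonneg _ _ he0.le, hre,
              ENNReal.rpow_add _ _ ht0 ENNReal.ofReal_ne_top]
            ring
        _ ≤ B.toFun (ENNReal.ofReal (2 * t)) ^ e
              * ENNReal.ofReal t ^ (-(r * e) - 1) :=
            mul_le_mul_left (ENNReal.rpow_le_rpow (hB_ge t ht') he0.le) _
        _ = ENNReal.ofReal (1/2:ℝ) ^ (-(r * e) - 1) *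
              ((fun u : ℝ => B.toFun (ENNReal.ofReal u) ^ e
                * ENNReal.ofReal u ^ (-(r * e) - 1)) (2 * t)) := by
            simp only []
            rw [hsplit]
            ring
    refine le_trans step1 ?_
    rw [lintegral_const_mul' _ _ hKne, lint_comp_two hGm]
  rw [hLHS, hRHS]
  constructor
  · intro h
    exact lt_of_le_of_lt hJ2Ib (h1.1 h)
  · intro h
    apply h1.2
    refine lt_of_le_of_lt hIbJ2 ?_
    exact ENNReal.mul_lt_top (lt_top_iff_ne_top.2 hKne)
      (ENNReal.mul_lt_top (lt_top_iff_ne_top.2 ENNReal.ofReal_ne_top) h)
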